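/- arXiv:1401.3605 — 3 statements merged into one kernel-verified Lean document; each statement's English description precedes it below -/
import Mathlib

section
/- Let μ and ν be r×p and p×r matrix functions on [0,T] with entries in L²(0,T), set κ(x,t) = μ(x)ν(t), and define the iterated kernels κ₁(x,t) = ∫_{x−t}^{x} κ(ξ, ξ+t−x) dξ and κ_{k+1}(x,t) = ∫_{x−t}^{x} ∫_{y+t−x}^{y} κ(y,s) κ_k(s, y+t−x) ds dy for 0 ≤ t ≤ x ≤ T. Then there exist constants C₀, C₁ > 0 such that ‖κ_k(x,t)‖ ≤ C₀ C₁^{k−1} x^{k−1}/(k−1)! for all 0 ≤ t ≤ x ≤ T and all k ≥ 1. -/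
open MeasureTheory Matrix

noncomputable section

attribute [local instance] Matrix.frobeniusNormedAddCommGroup Matrix.frobeniusNormedSpace

open Set
open scoped ENNReal NNReal

namespace IterKAux

lemma frob_entry_le {m n : ℕ} (M : Matrix (Fin m) (Fin n) ℂ) (i : Fin m) (j : Fin n) :
    ‖M i j‖ ≤ ‖M‖ := by
  rw [Matrix.frobenius_norm_def]
  have h1 : ‖M i j‖ ^ (2:ℝ) ≤ ∑ i', ∑ j', ‖M i' j'‖ ^ (2:ℝ) := by
    have h2 : ‖M i j‖ ^ (2:ℝ) ≤ ∑ j', ‖M i j'‖ ^ (2:ℝ) :=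
      Finset.single_le_sum (f := fun j' => ‖M i j'‖ ^ (2:ℝ))
        (fun _ _ => Real.rpow_nonneg (norm_nonneg _) _) (Finset.mem_univ j)
    exact h2.trans <| Finset.single_le_sum (f := fun i' => ∑ j', ‖M i' j'‖ ^ (2:ℝ))
      (fun _ _ => Finset.sum_nonneg fun _ _ => Real.rpow_nonneg (norm_nonneg _) _)
      (Finset.mem_univ i)
  calc ‖M i j‖ = (‖M i j‖ ^ (2:ℝ)) ^ (1/2:ℝ) := by
        rw [← Real.rpow_mul (norm_nonneg _)]
        norm_num
    _ ≤ _ := Real.rpow_le_rpow (Real.rpow_nonneg (norm_nonneg _) _) h1 (by norm_num)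

lemma frob_le_sum {m n : ℕ} (M : Matrix (Fin m) (Fin n) ℂ) :
    ‖M‖ ≤ ∑ i, ∑ j, ‖M i j‖ := by
  rw [Matrix.frobenius_norm_def]
  have hs : (0:ℝ) ≤ ∑ i, ∑ j, ‖M i j‖ :=
    Finset.sum_nonneg fun _ _ => Finset.sum_nonneg fun _ _ => norm_nonneg _
  have h1 : ∑ i, ∑ j, ‖M i j‖ ^ (2:ℝ) ≤ (∑ i, ∑ j, ‖M i j‖) ^ (2:ℝ) := by
    rw [Real.rpow_two]
    simp_rw [Real.rpow_two]
    rw [← Finset.sum_product']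
    rw [← Finset.sum_product' (f := fun i j => ‖M i j‖)]
    exact Finset.sum_sq_le_sq_sum_of_nonneg fun _ _ => norm_nonneg _
  calc (∑ i, ∑ j, ‖M i j‖ ^ (2:ℝ)) ^ (1/2:ℝ)
      ≤ ((∑ i, ∑ j, ‖M i j‖) ^ (2:ℝ)) ^ (1/2:ℝ) :=
        Real.rpow_le_rpow (Finset.sum_nonneg fun _ _ =>
          Finset.sum_nonneg fun _ _ => Real.rpow_nonneg (norm_nonneg _) _) h1 (by norm_num)
    _ = _ := by
        rw [← Real.rpow_mul hs]; norm_num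


lemma enorm_entry_le {m n : ℕ} (M : Matrix (Fin m) (Fin n) ℂ) (i : Fin m) (j : Fin n) :
    (‖M i j‖₊ : ℝ≥0∞) ≤ (‖M‖₊ : ℝ≥0∞) := by
  rw [ENNReal.coe_le_coe, ← NNReal.coe_le_coe]
  exact_mod_cast frob_entry_le M i j

lemma enorm_le_sum {m n : ℕ} (M : Matrix (Fin m) (Fin n) ℂ) :
    (‖M‖₊ : ℝ≥0∞) ≤ ∑ i, ∑ j, (‖M i j‖₊ : ℝ≥0∞) := by
  have := frob_le_sum M
  have h2 : ‖M‖₊ ≤ ∑ i, ∑ j, ‖M i j‖₊ := by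
    rw [← NNReal.coe_le_coe]; push_cast; exact this
  exact_mod_cast h2

lemma holder2 (S : Set ℝ) (f g : ℝ → ℝ≥0∞)
    (hf : AEMeasurable f (volume.restrict S)) (hg : AEMeasurable g (volume.restrict S)) :
    ∫⁻ a in S, f a * g a ≤
      (∫⁻ a in S, f a ^ (2:ℝ)) ^ (1/2:ℝ) * (∫⁻ a in S, g a ^ (2:ℝ)) ^ (1/2:ℝ) := by
  simpa using ENNReal.lintegral_mul_le_Lp_mul_Lq (volume.restrict S)
    Real.HolderConjugate.two_two hf hg

lemma shift_lintegral (g : ℝ → ℝ≥0∞) (a b c : ℝ) :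
    ∫⁻ ξ in Set.Ioc a b, g (ξ + c) = ∫⁻ u in Set.Ioc (a+c) (b+c), g u := by
  have h := (measurePreserving_add_right volume c).setLIntegral_comp_emb
    (MeasurableEquiv.addRight c).measurableEmbedding g (Set.Ioc a b)
  simpa [Set.image_add_const_Ioc] using h

lemma lint_poly (c y : ℝ) (hc : 0 ≤ c) (hy : 0 ≤ y) (n : ℕ) :
    ∫⁻ s in Set.Ioc 0 y, ENNReal.ofReal (c * s ^ n) =
      ENNReal.ofReal (c * (y ^ (n+1) / (n+1))) := by
  rw [← MeasureTheory.ofReal_integral_eq_lintegral_ofReal]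
  · congr 1
    rw [← intervalIntegral.integral_of_le hy, intervalIntegral.integral_const_mul,
      integral_pow]
    simp
  · exact (continuous_const.mul (continuous_pow n)).integrableOn_Ioc
  · filter_upwards [ae_restrict_mem measurableSet_Ioc] with s hs
    have : (0:ℝ) < s := hs.1
    positivity

lemma sqrt_ofReal (w : ℝ) (hw : 0 ≤ w) :
    (ENNReal.ofReal (w ^ 2)) ^ (1/2:ℝ) = ENNReal.ofReal w := by
  rw [ENNReal.ofReal_pow hw, ← ENNReal.rpow_natCast, ← ENNReal.rpow_mul]
  norm_num

lemma rpow_half_sq (z : ℝ≥0∞) : (z ^ (1/2:ℝ)) ^ (2:ℝ) = z := by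
  rw [← ENNReal.rpow_mul]; norm_num


lemma nnnorm_matrix_integral_le {n : ℕ} (f : ℝ → Matrix (Fin n) (Fin n) ℂ) (a b : ℝ)
    (hab : a ≤ b) (g : ℝ → ℝ≥0∞)
    (hg : AEMeasurable g (volume.restrict (Set.Ioc a b)))
    (hfg : ∀ ξ ∈ Set.Ioc a b, (‖f ξ‖₊ : ℝ≥0∞) ≤ g ξ) :
    (‖(Matrix.of fun i j => ∫ ξ in a..b, f ξ i j : Matrix (Fin n) (Fin n) ℂ)‖₊ : ℝ≥0∞)
      ≤ (n : ℝ≥0∞) * (n : ℝ≥0∞) * ∫⁻ ξ in Set.Ioc a b, g ξ := by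
  refine (enorm_le_sum _).trans ?_
  have hterm : ∀ (i j : Fin n),
      (‖(Matrix.of fun i j => ∫ ξ in a..b, f ξ i j : Matrix (Fin n) (Fin n) ℂ) i j‖₊ : ℝ≥0∞)
        ≤ ∫⁻ ξ in Set.Ioc a b, g ξ := by
    intro i j
    have h1 : (‖∫ ξ in a..b, f ξ i j‖₊ : ℝ≥0∞) ≤ ∫⁻ ξ in Set.Ioc a b, (‖f ξ i j‖₊ : ℝ≥0∞) := by
      rw [intervalIntegral.integral_of_le hab]
      exact MeasureTheory.enorm_integral_le_lintegral_enorm _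
    refine le_trans (by simpa using h1) (MeasureTheory.setLIntegral_mono_ae hg ?_)
    exact Filter.Eventually.of_forall fun ξ hξ => (enorm_entry_le (f ξ) i j).trans (hfg ξ hξ)
  calc ∑ i, ∑ j, (‖(Matrix.of fun i j => ∫ ξ in a..b, f ξ i j : Matrix (Fin n) (Fin n) ℂ) i j‖₊ : ℝ≥0∞)
      ≤ ∑ _i : Fin n, ∑ _j : Fin n, ∫⁻ ξ in Set.Ioc a b, g ξ :=
        Finset.sum_le_sum fun i _ => Finset.sum_le_sum fun j _ => hterm i j
    _ = (n : ℝ≥0∞) * (n : ℝ≥0∞) * ∫⁻ ξ in Set.Ioc a b, g ξ := by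
        simp [Finset.sum_const, mul_assoc]

lemma mp_restrict (c : ℝ) {S : Set ℝ} (hS : MeasurableSet S) :
    MeasurePreserving (fun ξ => ξ + c)
      (volume.restrict ((fun ξ : ℝ => ξ + c) ⁻¹' S)) (volume.restrict S) :=
  (measurePreserving_add_right volume c).restrict_preimage hS

end IterKAux

open IterKAux

/-- The iterated kernels: `iterK κ (k-1) = κ_k`, i.e.
`κ₁(x,t) = ∫_{x-t}^{x} κ(ξ, ξ+t−x) dξ` and
`κ_{k+1}(x,t) = ∫_{x−t}^{x} ∫_{y+t−x}^{y} κ(y,s) κ_k(s, y+t−x) ds dy`. -/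
noncomputable def iterK {r : ℕ} (κ : ℝ → ℝ → Matrix (Fin r) (Fin r) ℂ) :
    ℕ → ℝ → ℝ → Matrix (Fin r) (Fin r) ℂ
  | 0 => fun x t => Matrix.of fun a b => ∫ ξ in (x - t)..x, κ ξ (ξ + t - x) a b
  | (k + 1) => fun x t => Matrix.of fun a b =>
      ∫ y in (x - t)..x, ∫ s in (y + t - x)..y, (κ y s * iterK κ k s (y + t - x)) a b

/-- the iterated kernels of `κ(x,t) = μ(x)ν(t)` with square-summable `μ, ν`
satisfy `‖κ_k(x,t)‖ ≤ C₀ C₁^{k−1} x^{k−1}/(k−1)!` on the triangle `0 ≤ t ≤ x ≤ T`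
(here `κ_k = iterK κ (k-1)`, so the bound reads `‖iterK κ k x t‖ ≤ C₀ C₁^k x^k / k!`). -/
theorem iterated_kernel_factorial_bound
    {r p : ℕ} (T : ℝ) (hT : 0 < T)
    (μ : ℝ → Matrix (Fin r) (Fin p) ℂ) (ν : ℝ → Matrix (Fin p) (Fin r) ℂ)
    (hμ : ∀ a b, MemLp (fun x => μ x a b) 2 (volume.restrict (Set.Ioc (0 : ℝ) T)))
    (hν : ∀ a b, MemLp (fun x => ν x a b) 2 (volume.restrict (Set.Ioc (0 : ℝ) T))) :
    ∃ C₀ > (0 : ℝ), ∃ C₁ > (0 : ℝ), ∀ k : ℕ, ∀ x t : ℝ,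
      0 ≤ t → t ≤ x → x ≤ T →
      ‖iterK (fun x' t' => μ x' * ν t') k x t‖
        ≤ C₀ * C₁ ^ k * x ^ k / (Nat.factorial k) := by
  classical
  set F : ℝ → ℝ≥0∞ := fun y => ((‖μ y‖₊ : ℝ≥0∞)) with hFdef
  set G : ℝ → ℝ≥0∞ := fun s => ((‖ν s‖₊ : ℝ≥0∞)) with hGdef
  have hFeq : ∀ y, F y = (∑ a, ∑ b, ((‖μ y a b‖₊ : ℝ≥0∞)) ^ (2:ℝ)) ^ (1/2:ℝ) := by
    intro y
    simp only [hFdef, Matrix.frobenius_nnnorm_def,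
      ENNReal.coe_rpow_of_nonneg _ (show (0:ℝ) ≤ 1/2 by norm_num), ENNReal.coe_finset_sum]
    congr 1
    refine Finset.sum_congr rfl fun a _ => Finset.sum_congr rfl fun b _ => ?_
    rw [ENNReal.coe_rpow_of_nonneg _ (show (0:ℝ) ≤ 2 by norm_num)]
  have hGeq : ∀ s, G s = (∑ a, ∑ b, ((‖ν s a b‖₊ : ℝ≥0∞)) ^ (2:ℝ)) ^ (1/2:ℝ) := by
    intro s
    simp only [hGdef, Matrix.frobenius_nnnorm_def,
      ENNReal.coe_rpow_of_nonneg _ (show (0:ℝ) ≤ 1/2 by norm_num), ENNReal.coe_finset_sum]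
    congr 1
    refine Finset.sum_congr rfl fun a _ => Finset.sum_congr rfl fun b _ => ?_
    rw [ENNReal.coe_rpow_of_nonneg _ (show (0:ℝ) ≤ 2 by norm_num)]
  have hFmeas : AEMeasurable F (volume.restrict (Set.Ioc (0:ℝ) T)) := by
    rw [funext hFeq]
    exact ENNReal.continuous_rpow_const.measurable.comp_aemeasurable
      (Finset.aemeasurable_fun_sum _ fun a _ => Finset.aemeasurable_fun_sum _ fun b _ =>
        ENNReal.continuous_rpow_const.measurable.comp_aemeasurable (hμ a b).aestronglyMeasurable.enorm)
  have hGmeas : AEMeasurable G (volume.restrict (Set.Ioc (0:ℝ) T)) := by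
    rw [funext hGeq]
    exact ENNReal.continuous_rpow_const.measurable.comp_aemeasurable
      (Finset.aemeasurable_fun_sum _ fun a _ => Finset.aemeasurable_fun_sum _ fun b _ =>
        ENNReal.continuous_rpow_const.measurable.comp_aemeasurable (hν a b).aestronglyMeasurable.enorm)
  have hFm' : ∀ S : Set ℝ, S ⊆ Set.Ioc 0 T → AEMeasurable F (volume.restrict S) :=
    fun S hS => hFmeas.mono_measure (Measure.restrict_mono hS le_rfl)
  have hGm' : ∀ S : Set ℝ, S ⊆ Set.Ioc 0 T → AEMeasurable G (volume.restrict S) :=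
    fun S hS => hGmeas.mono_measure (Measure.restrict_mono hS le_rfl)
  -- finiteness of L² masses
  have hμm : ∀ (a : Fin r) (b : Fin p), AEMeasurable
      (fun y => ((‖μ y a b‖₊ : ℝ≥0∞)) ^ (2:ℝ)) (volume.restrict (Set.Ioc (0:ℝ) T)) :=
    fun a b => ENNReal.continuous_rpow_const.measurable.comp_aemeasurable
      (hμ a b).aestronglyMeasurable.enorm
  have hνm : ∀ (a : Fin p) (b : Fin r), AEMeasurable
      (fun y => ((‖ν y a b‖₊ : ℝ≥0∞)) ^ (2:ℝ)) (volume.restrict (Set.Ioc (0:ℝ) T)) :=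
    fun a b => ENNReal.continuous_rpow_const.measurable.comp_aemeasurable
      (hν a b).aestronglyMeasurable.enorm
  have hIμ : (∫⁻ y in Set.Ioc (0:ℝ) T, F y ^ (2:ℝ)) ≠ ∞ := by
    have h2 : ∀ y, F y ^ (2:ℝ) = ∑ a, ∑ b, ((‖μ y a b‖₊ : ℝ≥0∞)) ^ (2:ℝ) := fun y => by
      rw [hFeq y, rpow_half_sq]
    simp only [h2]
    rw [MeasureTheory.lintegral_finset_sum' _
      (fun a _ => Finset.aemeasurable_fun_sum _ fun b _ => hμm a b)]
    refine (ENNReal.sum_lt_top.mpr fun a _ => ?_).ne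
    rw [MeasureTheory.lintegral_finset_sum' _ (fun b _ => hμm a b)]
    refine ENNReal.sum_lt_top.mpr fun b _ => ?_
    have hsn := (hμ a b).2
    rw [MeasureTheory.eLpNorm_eq_lintegral_rpow_enorm_toReal (by norm_num) (by norm_num),
      show ENNReal.toReal 2 = (2:ℝ) from by norm_num] at hsn
    exact (ENNReal.rpow_lt_top_iff_of_pos (by norm_num : (0:ℝ) < 1/2)).mp hsn
  have hIν : (∫⁻ s in Set.Ioc (0:ℝ) T, G s ^ (2:ℝ)) ≠ ∞ := by
    have h2 : ∀ s, G s ^ (2:ℝ) = ∑ a, ∑ b, ((‖ν s a b‖₊ : ℝ≥0∞)) ^ (2:ℝ) := fun s => by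
      rw [hGeq s, rpow_half_sq]
    simp only [h2]
    rw [MeasureTheory.lintegral_finset_sum' _
      (fun a _ => Finset.aemeasurable_fun_sum _ fun b _ => hνm a b)]
    refine (ENNReal.sum_lt_top.mpr fun a _ => ?_).ne
    rw [MeasureTheory.lintegral_finset_sum' _ (fun b _ => hνm a b)]
    refine ENNReal.sum_lt_top.mpr fun b _ => ?_
    have hsn := (hν a b).2
    rw [MeasureTheory.eLpNorm_eq_lintegral_rpow_enorm_toReal (by norm_num) (by norm_num),
      show ENNReal.toReal 2 = (2:ℝ) from by norm_num] at hsn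
    exact (ENNReal.rpow_lt_top_iff_of_pos (by norm_num : (0:ℝ) < 1/2)).mp hsn
  set A : ℝ≥0∞ := (∫⁻ y in Set.Ioc (0:ℝ) T, F y ^ (2:ℝ)) ^ (1/2:ℝ) with hAdef
  set B : ℝ≥0∞ := (∫⁻ s in Set.Ioc (0:ℝ) T, G s ^ (2:ℝ)) ^ (1/2:ℝ) with hBdef
  have hA_top : A ≠ ∞ := by
    rw [hAdef]
    exact ((ENNReal.rpow_lt_top_iff_of_pos (by norm_num)).mpr hIμ.lt_top).ne
  have hB_top : B ≠ ∞ := by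
    rw [hBdef]
    exact ((ENNReal.rpow_lt_top_iff_of_pos (by norm_num)).mpr hIν.lt_top).ne
  have hFA : ∀ u v : ℝ, 0 ≤ u → v ≤ T →
      (∫⁻ y in Set.Ioc u v, F y ^ (2:ℝ)) ^ (1/2:ℝ) ≤ A :=
    fun u v hu hv => ENNReal.rpow_le_rpow
      (lintegral_mono_set (Set.Ioc_subset_Ioc hu hv)) (by norm_num)
  have hGB : ∀ u v : ℝ, 0 ≤ u → v ≤ T →
      (∫⁻ s in Set.Ioc u v, G s ^ (2:ℝ)) ^ (1/2:ℝ) ≤ B :=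
    fun u v hu hv => ENNReal.rpow_le_rpow
      (lintegral_mono_set (Set.Ioc_subset_Ioc hu hv)) (by norm_num)
  set K : ℝ := (A * B).toReal with hKdef
  have hK0 : 0 ≤ K := ENNReal.toReal_nonneg
  set C : ℝ := ((r:ℝ)^2 + 1)^2 * (K + 1) with hCdef
  have hCpos : 0 < C := by positivity
  have hCbase : (r:ℝ) * r * K ≤ C := by nlinarith [sq_nonneg ((r:ℝ)^2), sq_nonneg (r:ℝ)]
  have hCstep : (r:ℝ) * r * ((r:ℝ) * r) * K ≤ C := by nlinarith [sq_nonneg (r:ℝ), sq_nonneg ((r:ℝ)^2 - 1)]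
  refine ⟨C, hCpos, C, hCpos, ?_⟩
  intro k
  induction k with
  | zero =>
    intro x t ht htx hxT
    have hxt0 : (0:ℝ) ≤ x - t := by linarith
    have hpre : (fun ξ : ℝ => ξ + (t - x)) ⁻¹' (Set.Ioc 0 t) = Set.Ioc (x-t) x := by
      ext ξ
      simp only [Set.mem_preimage, Set.mem_Ioc]
      constructor
      · rintro ⟨h1, h2⟩; exact ⟨by linarith, by linarith⟩
      · rintro ⟨h1, h2⟩; exact ⟨by linarith, by linarith⟩
    have hshift : AEMeasurable (fun ξ => G (ξ + (t - x)))
        (volume.restrict (Set.Ioc (x-t) x)) := by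
      have hmp := mp_restrict (t - x) (measurableSet_Ioc (a := (0:ℝ)) (b := t))
      rw [hpre] at hmp
      exact (hGm' (Set.Ioc 0 t) (Set.Ioc_subset_Ioc le_rfl (by linarith))).comp_quasiMeasurePreserving hmp.quasiMeasurePreserving
    have hbound : (‖iterK (fun x' t' => μ x' * ν t') 0 x t‖₊ : ℝ≥0∞)
        ≤ (r : ℝ≥0∞) * r * ∫⁻ ξ in Set.Ioc (x-t) x, F ξ * G (ξ + (t - x)) := by
      rw [show iterK (fun x' t' => μ x' * ν t') 0 x t
        = Matrix.of fun a b => ∫ ξ in (x-t)..x, (μ ξ * ν (ξ + t - x)) a b from rfl]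
      refine nnnorm_matrix_integral_le (fun ξ => μ ξ * ν (ξ + t - x)) (x - t) x (by linarith)
        (fun ξ => F ξ * G (ξ + (t - x)))
        ((hFm' _ (Set.Ioc_subset_Ioc hxt0 hxT)).mul hshift) ?_
      intro ξ _
      have hξ : ξ + t - x = ξ + (t - x) := by ring
      rw [hξ]
      calc ((‖μ ξ * ν (ξ + (t-x))‖₊ : ℝ≥0∞)) ≤ ((‖μ ξ‖₊ * ‖ν (ξ + (t-x))‖₊ : ℝ≥0) : ℝ≥0∞) :=
            ENNReal.coe_le_coe.mpr (Matrix.frobenius_nnnorm_mul _ _)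
        _ = F ξ * G (ξ + (t-x)) := by rw [ENNReal.coe_mul]
    have hint : (∫⁻ ξ in Set.Ioc (x-t) x, F ξ * G (ξ + (t - x))) ≤ A * B := by
      refine (holder2 _ _ _ (hFm' _ (Set.Ioc_subset_Ioc hxt0 hxT)) hshift).trans ?_
      refine mul_le_mul' (hFA _ _ hxt0 hxT) ?_
      have htrans : (∫⁻ ξ in Set.Ioc (x-t) x, (G (ξ + (t - x))) ^ (2:ℝ))
          = ∫⁻ u in Set.Ioc 0 t, G u ^ (2:ℝ) := by
        have hsl := shift_lintegral (fun u => G u ^ (2:ℝ)) (x-t) x (t-x)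
        rw [show x - t + (t - x) = 0 by ring, show x + (t - x) = t by ring] at hsl
        exact hsl
      rw [htrans]
      exact hGB 0 t le_rfl (by linarith)
    have hfin : ((r : ℝ≥0∞) * r * (A * B)) ≠ ∞ :=
      ENNReal.mul_ne_top (ENNReal.mul_ne_top (ENNReal.natCast_ne_top r)
        (ENNReal.natCast_ne_top r)) (ENNReal.mul_ne_top hA_top hB_top)
    have h1 : (‖iterK (fun x' t' => μ x' * ν t') 0 x t‖₊ : ℝ≥0∞)
        ≤ (r : ℝ≥0∞) * r * (A * B) := hbound.trans (mul_le_mul_right hint _)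
    have h2 := ENNReal.toReal_mono hfin h1
    rw [ENNReal.coe_toReal, coe_nnnorm] at h2
    rw [ENNReal.toReal_mul, ENNReal.toReal_mul, ENNReal.toReal_natCast, ← hKdef] at h2
    calc ‖iterK (fun x' t' => μ x' * ν t') 0 x t‖ ≤ (r:ℝ) * r * K := h2
      _ ≤ C := hCbase
      _ = C * C ^ 0 * x ^ 0 / (Nat.factorial 0) := by simp
  | succ k ih =>
    intro x t ht htx hxT
    have hxt0 : (0:ℝ) ≤ x - t := by linarith
    have hx0 : (0:ℝ) ≤ x := le_trans ht htx
    obtain ⟨c, hcdef⟩ : ∃ c : ℝ, c = C * C ^ k / (Nat.factorial k : ℝ) := ⟨_, rfl⟩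
    have hfk0 : (0:ℝ) < (Nat.factorial k : ℝ) := by
      exact_mod_cast Nat.factorial_pos k
    have hc0 : 0 < c := by
      rw [hcdef]; exact div_pos (mul_pos hCpos (pow_pos hCpos k)) hfk0
    obtain ⟨d, hddef⟩ : ∃ d : ℝ, d = c ^ 2 / (2 * (k:ℝ) + 1) := ⟨_, rfl⟩
    have hd0 : 0 ≤ d := by
      rw [hddef]; positivity
    set h : ℝ → ℝ≥0∞ := fun y => (ENNReal.ofReal (d * y ^ (2*k+1))) ^ (1/2:ℝ) with hhdef
    have hpolym : Measurable (fun y : ℝ => ENNReal.ofReal (d * y ^ (2*k+1))) :=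
      ENNReal.measurable_ofReal.comp ((measurable_id.pow_const (2*k+1)).const_mul d)
    have hhmeas : Measurable h := ENNReal.continuous_rpow_const.measurable.comp hpolym
    have hpolyk : Measurable (fun s : ℝ => ENNReal.ofReal (c * s ^ k)) :=
      ENNReal.measurable_ofReal.comp ((measurable_id.pow_const k).const_mul c)
    -- inner bound
    have inner : ∀ y ∈ Set.Ioc (x-t) x,
        (‖(Matrix.of fun i j => ∫ s in (y+t-x)..y,
            ((μ y * ν s) * iterK (fun x' t' => μ x' * ν t') k s (y+t-x)) i j
            : Matrix (Fin r) (Fin r) ℂ)‖₊ : ℝ≥0∞)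
          ≤ (r : ℝ≥0∞) * r * (B * (F y * h y)) := by
      intro y hy
      have hy0 : 0 < y := lt_of_le_of_lt hxt0 hy.1
      have hyT : y ≤ T := le_trans hy.2 hxT
      have hytx : 0 < y + t - x := by have := hy.1; linarith
      have h1 := nnnorm_matrix_integral_le
        (fun s => (μ y * ν s) * iterK (fun x' t' => μ x' * ν t') k s (y+t-x))
        (y+t-x) y (by linarith)
        (fun s => F y * (G s * ENNReal.ofReal (c * s ^ k)))
        (aemeasurable_const.mul (((hGm' _ (Set.Ioc_subset_Ioc hytx.le hyT))).mul
          hpolyk.aemeasurable)) ?_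
      · refine h1.trans ?_
        rw [MeasureTheory.lintegral_const_mul' (F y) _ ENNReal.coe_ne_top]
        rw [show (r : ℝ≥0∞) * r * (B * (F y * h y))
          = (r:ℝ≥0∞) * r * (F y * (B * h y)) by ring]
        refine mul_le_mul_right (mul_le_mul_right ?_ (F y)) _
        calc ∫⁻ s in Set.Ioc (y+t-x) y, G s * ENNReal.ofReal (c * s ^ k)
            ≤ ∫⁻ s in Set.Ioc 0 y, G s * ENNReal.ofReal (c * s ^ k) :=
              lintegral_mono_set (Set.Ioc_subset_Ioc hytx.le le_rfl)
          _ ≤ (∫⁻ s in Set.Ioc 0 y, G s ^ (2:ℝ)) ^ (1/2:ℝ) *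
              (∫⁻ s in Set.Ioc 0 y, (ENNReal.ofReal (c * s ^ k)) ^ (2:ℝ)) ^ (1/2:ℝ) :=
              holder2 _ _ _ (hGm' _ (Set.Ioc_subset_Ioc le_rfl hyT)) hpolyk.aemeasurable
          _ ≤ B * h y := by
              refine mul_le_mul' (hGB 0 y le_rfl hyT) ?_
              have heq : (∫⁻ s in Set.Ioc 0 y, (ENNReal.ofReal (c * s ^ k)) ^ (2:ℝ))
                  = ENNReal.ofReal (d * y ^ (2*k+1)) := by
                have hcongr : ∀ s ∈ Set.Ioc (0:ℝ) y,
                    (ENNReal.ofReal (c * s ^ k)) ^ (2:ℝ) = ENNReal.ofReal (c^2 * s ^ (2*k)) := by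
                  intro s hs
                  have hs0 : (0:ℝ) ≤ s := hs.1.le
                  rw [show c^2 * s^(2*k) = (c * s^k)^2 by ring,
                    ENNReal.ofReal_pow (mul_nonneg hc0.le (pow_nonneg hs0 k)),
                    ← ENNReal.rpow_natCast]
                  norm_num
                rw [MeasureTheory.setLIntegral_congr_fun measurableSet_Ioc
                  hcongr,
                  lint_poly (c^2) y (sq_nonneg c) hy0.le (2*k)]
                congr 1
                have hcast : ((2*k : ℕ) : ℝ) + 1 = 2*(k:ℝ)+1 := by push_cast; ring
                rw [hddef, hcast]
                ring
              rw [heq, hhdef]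
      · intro s hs
        have hs0 : 0 < s := lt_trans hytx hs.1
        have ihs := ih s (y+t-x) hytx.le hs.1.le (le_trans (le_trans hs.2 hy.2) hxT)
        have ihs' : ‖iterK (fun x' t' => μ x' * ν t') k s (y+t-x)‖ ≤ c * s ^ k := by
          refine ihs.trans (le_of_eq ?_)
          rw [hcdef]; ring
        calc ((‖(μ y * ν s) * iterK (fun x' t' => μ x' * ν t') k s (y+t-x)‖₊ : ℝ≥0∞))
            ≤ (‖μ y * ν s‖₊ : ℝ≥0∞) * (‖iterK (fun x' t' => μ x' * ν t') k s (y+t-x)‖₊ : ℝ≥0∞) := by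
              rw [← ENNReal.coe_mul]
              exact ENNReal.coe_le_coe.mpr (Matrix.frobenius_nnnorm_mul _ _)
          _ ≤ (F y * G s) * ENNReal.ofReal (c * s ^ k) := by
              refine mul_le_mul' ?_ ?_
              · rw [← ENNReal.coe_mul]
                exact ENNReal.coe_le_coe.mpr (Matrix.frobenius_nnnorm_mul _ _)
              · rw [← enorm_eq_nnnorm, ← ofReal_norm]
                exact ENNReal.ofReal_le_ofReal ihs'
          _ = F y * (G s * ENNReal.ofReal (c * s ^ k)) := by ring
    -- outer bound
    have houter := nnnorm_matrix_integral_le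
      (fun y => Matrix.of fun i j => ∫ s in (y+t-x)..y,
          ((μ y * ν s) * iterK (fun x' t' => μ x' * ν t') k s (y+t-x)) i j)
      (x-t) x (by linarith)
      (fun y => (r : ℝ≥0∞) * r * (B * (F y * h y)))
      (aemeasurable_const.mul (aemeasurable_const.mul
        ((hFm' _ (Set.Ioc_subset_Ioc hxt0 hxT)).mul hhmeas.aemeasurable)))
      inner
    obtain ⟨w, hwdef⟩ : ∃ w : ℝ,
      w = c * x ^ (k+1) / (Real.sqrt ((2*(k:ℝ)+1) * (2*(k:ℝ)+2))) := ⟨_, rfl⟩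
    have hS0 : 0 < Real.sqrt ((2*(k:ℝ)+1) * (2*(k:ℝ)+2)) :=
      Real.sqrt_pos.mpr (by positivity)
    have hS2 : (Real.sqrt ((2*(k:ℝ)+1) * (2*(k:ℝ)+2))) ^ 2 = (2*(k:ℝ)+1) * (2*(k:ℝ)+2) :=
      Real.sq_sqrt (by positivity)
    have hw0 : 0 ≤ w := by
      rw [hwdef]
      exact div_nonneg (mul_nonneg hc0.le (pow_nonneg hx0 _)) (Real.sqrt_nonneg _)
    have hout2 : (∫⁻ y in Set.Ioc (x-t) x, (r : ℝ≥0∞) * r * (B * (F y * h y)))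
        ≤ (r : ℝ≥0∞) * r * (B * (A * ENNReal.ofReal w)) := by
      have hrw : ∀ y:ℝ, (r : ℝ≥0∞) * r * (B * (F y * h y))
          = ((r:ℝ≥0∞) * r * B) * (F y * h y) := fun y => by ring
      simp only [hrw]
      rw [MeasureTheory.lintegral_const_mul' _ _ (ENNReal.mul_ne_top (ENNReal.mul_ne_top
        (ENNReal.natCast_ne_top r) (ENNReal.natCast_ne_top r)) hB_top)]
      rw [show (r : ℝ≥0∞) * r * (B * (A * ENNReal.ofReal w))
        = ((r:ℝ≥0∞) * r * B) * (A * ENNReal.ofReal w) by ring]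
      refine mul_le_mul_right ?_ _
      calc ∫⁻ y in Set.Ioc (x-t) x, F y * h y
          ≤ ∫⁻ y in Set.Ioc 0 x, F y * h y :=
            lintegral_mono_set (Set.Ioc_subset_Ioc hxt0 le_rfl)
        _ ≤ (∫⁻ y in Set.Ioc 0 x, F y ^ (2:ℝ)) ^ (1/2:ℝ) *
            (∫⁻ y in Set.Ioc 0 x, h y ^ (2:ℝ)) ^ (1/2:ℝ) :=
            holder2 _ _ _ (hFm' _ (Set.Ioc_subset_Ioc le_rfl hxT)) hhmeas.aemeasurable
        _ ≤ A * ENNReal.ofReal w := by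
            refine mul_le_mul' (hFA 0 x le_rfl hxT) ?_
            have h2 : ∀ y:ℝ, h y ^ (2:ℝ) = ENNReal.ofReal (d * y ^ (2*k+1)) := fun y => by
              rw [hhdef]; exact rpow_half_sq _
            simp only [h2]
            rw [lint_poly d x hd0 hx0 (2*k+1)]
            have hkey : d * (x ^ (2*k+1+1) / (((2*k+1 : ℕ) : ℝ) + 1)) = w ^ 2 := by
              have hcast : ((2*k+1 : ℕ) : ℝ) + 1 = 2*(k:ℝ)+2 := by push_cast; ring
              have hq : w ^ 2 = c^2 * (x^(k+1))^2 / ((2*(k:ℝ)+1) * (2*(k:ℝ)+2)) := by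
                rw [hwdef, div_pow, mul_pow, hS2]
              rw [hq, hddef, hcast, show 2*k+1+1 = (k+1)*2 from by ring, pow_mul,
                div_mul_div_comm]
            rw [hkey, sqrt_ofReal w hw0]
    -- combine and convert to ℝ
    have htotal : (‖iterK (fun x' t' => μ x' * ν t') (k+1) x t‖₊ : ℝ≥0∞)
        ≤ (r : ℝ≥0∞) * r * ((r : ℝ≥0∞) * r * (B * (A * ENNReal.ofReal w))) := by
      refine le_trans ?_ (mul_le_mul_right hout2 _)
      exact houter
    have hfin : ((r : ℝ≥0∞) * r * ((r : ℝ≥0∞) * r * (B * (A * ENNReal.ofReal w)))) ≠ ∞ := by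
      refine ENNReal.mul_ne_top (ENNReal.mul_ne_top (ENNReal.natCast_ne_top r)
        (ENNReal.natCast_ne_top r)) (ENNReal.mul_ne_top (ENNReal.mul_ne_top
        (ENNReal.natCast_ne_top r) (ENNReal.natCast_ne_top r))
        (ENNReal.mul_ne_top hB_top (ENNReal.mul_ne_top hA_top ENNReal.ofReal_ne_top)))
    have h2 := ENNReal.toReal_mono hfin htotal
    rw [ENNReal.coe_toReal, coe_nnnorm] at h2
    simp only [ENNReal.toReal_mul, ENNReal.toReal_natCast, ENNReal.toReal_ofReal hw0] at h2
    -- h2 : ‖E (k+1)‖ ≤ r * r * (r * r * (B.toReal * (A.toReal * w)))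
    have hABK : B.toReal * A.toReal = K := by
      rw [hKdef, ENNReal.toReal_mul]; ring
    have h3 : ‖iterK (fun x' t' => μ x' * ν t') (k+1) x t‖
        ≤ ((r:ℝ) * r * ((r:ℝ) * r) * K) * w := by
      refine h2.trans (le_of_eq ?_)
      rw [← hABK]; ring
    have hwle : w ≤ c * x ^ (k+1) / ((k:ℝ) + 1) := by
      rw [hwdef]
      have hk1 : (0:ℝ) < (k:ℝ) + 1 := by positivity
      have hSk : (k:ℝ) + 1 ≤ Real.sqrt ((2*(k:ℝ)+1) * (2*(k:ℝ)+2)) := by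
        nlinarith [hS2, hS0.le]
      exact div_le_div_of_nonneg_left (mul_nonneg hc0.le (pow_nonneg hx0 _)) hk1 hSk
    have h4 : ((r:ℝ) * r * ((r:ℝ) * r) * K) * w
        ≤ C * (c * x ^ (k+1) / ((k:ℝ) + 1)) := by
      have hq0 : 0 ≤ c * x ^ (k+1) / ((k:ℝ) + 1) :=
        div_nonneg (mul_nonneg hc0.le (pow_nonneg hx0 _)) (by positivity)
      calc ((r:ℝ) * r * ((r:ℝ) * r) * K) * w
          ≤ ((r:ℝ) * r * ((r:ℝ) * r) * K) * (c * x ^ (k+1) / ((k:ℝ) + 1)) := by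
            refine mul_le_mul_of_nonneg_left hwle
              (mul_nonneg (mul_nonneg (mul_nonneg (Nat.cast_nonneg r) (Nat.cast_nonneg r))
                (mul_nonneg (Nat.cast_nonneg r) (Nat.cast_nonneg r))) hK0)
        _ ≤ C * (c * x ^ (k+1) / ((k:ℝ) + 1)) :=
            mul_le_mul_of_nonneg_right hCstep hq0
    refine (h3.trans h4).trans (le_of_eq ?_)
    have hfac : ((Nat.factorial (k+1) : ℕ) : ℝ) = ((k:ℝ)+1) * (Nat.factorial k : ℝ) := by
      rw [Nat.factorial_succ]; push_cast; ring
    clear_value C K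
    rw [hcdef, hfac]
    field_simp
    ring
end
end

section
/- Let γ(x) = [γ₁(x) γ₂(x)] be an absolutely continuous m₂×m matrix function on [0,T] (with blocks of sizes m₂×m₁ and m₂×m₂) satisfying γ(x) j γ(x)* ≡ −I_{m₂} and γ'(x) j γ(x)* = 0 almost everywhere. Then for every x: γ₂(x) is invertible, the Schur coefficient γ₂(x)⁻¹γ₁(x) satisfies I_{m₂} − (γ₂⁻¹γ₁)(γ₂⁻¹γ₁)* = γ₂⁻¹(γ₂⁻¹)* (in particular this matrix is invertible), and almost everywhere γ₂' = γ₂ · (γ₂⁻¹γ₁)' · (γ₂⁻¹γ₁)* · (I_{m₂} − (γ₂⁻¹γ₁)(γ₂⁻¹γ₁)*)⁻¹. -/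
open MeasureTheory Matrix ComplexOrder

noncomputable section

/-- The signature matrix `j = diag(I_{m₁}, -I_{m₂})`. -/
def Jm (m₁ m₂ : ℕ) : Matrix (Fin m₁ ⊕ Fin m₂) (Fin m₁ ⊕ Fin m₂) ℂ :=
  Matrix.fromBlocks 1 0 0 (-1)

/-- Left `m₂ × m₁` block of an `m₂ × (m₁+m₂)` matrix function. -/
def blkL {m₁ m₂ : ℕ} (γ : ℝ → Matrix (Fin m₂) (Fin m₁ ⊕ Fin m₂) ℂ) (x : ℝ) :
    Matrix (Fin m₂) (Fin m₁) ℂ :=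
  (γ x).submatrix id Sum.inl

/-- Right `m₂ × m₂` block of an `m₂ × (m₁+m₂)` matrix function. -/
def blkR {m₁ m₂ : ℕ} (γ : ℝ → Matrix (Fin m₂) (Fin m₁ ⊕ Fin m₂) ℂ) (x : ℝ) :
    Matrix (Fin m₂) (Fin m₂) ℂ :=
  (γ x).submatrix id Sum.inr

/-- The Schur coefficient `γ₂⁻¹ γ₁`. -/
def schur {m₁ m₂ : ℕ} (γ : ℝ → Matrix (Fin m₂) (Fin m₁ ⊕ Fin m₂) ℂ) (x : ℝ) :
    Matrix (Fin m₂) (Fin m₁) ℂ :=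
  (blkR γ x)⁻¹ * blkL γ x

/- ### Auxiliary lemmas -/

/-- Block computation of `A * J * Bᴴ`. -/
lemma mul_Jm_conjTranspose {m₁ m₂ : ℕ} (A B : Matrix (Fin m₂) (Fin m₁ ⊕ Fin m₂) ℂ) :
    A * Jm m₁ m₂ * Bᴴ
      = A.submatrix id Sum.inl * (B.submatrix id Sum.inl)ᴴ
        - A.submatrix id Sum.inr * (B.submatrix id Sum.inr)ᴴ := by
  have hA : A = Matrix.fromCols (A.submatrix id Sum.inl) (A.submatrix id Sum.inr) := by
    ext i (j | j) <;> rfl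
  have hB : B = Matrix.fromCols (B.submatrix id Sum.inl) (B.submatrix id Sum.inr) := by
    ext i (j | j) <;> rfl
  conv_lhs => rw [hA, hB]
  rw [Jm, Matrix.fromCols_mul_fromBlocks,
    Matrix.conjTranspose_fromCols_eq_fromRows_conjTranspose,
    Matrix.fromCols_mul_fromRows]
  simp [Matrix.mul_neg, sub_eq_add_neg]

/-- Entrywise product rule for matrix-valued functions. -/
lemma hasDerivAt_matrix_mul {p q r : ℕ}
    (A : ℝ → Matrix (Fin p) (Fin q) ℂ) (B : ℝ → Matrix (Fin q) (Fin r) ℂ)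
    (A' : Matrix (Fin p) (Fin q) ℂ) (B' : Matrix (Fin q) (Fin r) ℂ) (x : ℝ)
    (hA : ∀ a b, HasDerivAt (fun s => A s a b) (A' a b) x)
    (hB : ∀ a b, HasDerivAt (fun s => B s a b) (B' a b) x) :
    ∀ a b, HasDerivAt (fun s => (A s * B s) a b) ((A' * B x + A x * B') a b) x := by
  intro a b
  have h := HasDerivAt.fun_sum (u := Finset.univ)
    (A := fun c s => A s a c * B s c b)
    (A' := fun c => A' a c * B x c b + A x a c * B' c b)
    (fun c _ => (hA a c).mul (hB c b))
  have hfun : (fun s => (A s * B s) a b) = fun s => ∑ c, A s a c * B s c b := by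
    funext s; rw [Matrix.mul_apply]
  rw [hfun]
  convert h using 1
  · rfl
  simp [Matrix.add_apply, Matrix.mul_apply, Finset.sum_add_distrib]

/-- Differentiability of the determinant of a matrix with differentiable entries. -/
lemma differentiableAt_matrix_det {p : ℕ} (M : ℝ → Matrix (Fin p) (Fin p) ℂ) (x : ℝ)
    (h : ∀ a b, DifferentiableAt ℝ (fun s => M s a b) x) :
    DifferentiableAt ℝ (fun s => (M s).det) x := by
  have hfun : (fun s => (M s).det)
      = fun s => ∑ σ : Equiv.Perm (Fin p),
          (Equiv.Perm.sign σ : ℂ) * ∏ i, M s (σ i) i := by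
    funext s; rw [Matrix.det_apply']
  rw [hfun]
  refine DifferentiableAt.fun_sum fun σ _ => DifferentiableAt.const_mul ?_ _
  exact (HasDerivAt.fun_finsetProd (u := Finset.univ)
    (f := fun i s => M s (σ i) i)
    (f' := fun i => deriv (fun s => M s (σ i) i) x)
    (fun i _ => (h (σ i) i).hasDerivAt)).differentiableAt

/-- Differentiability of adjugate entries. -/
lemma differentiableAt_matrix_adjugate {p : ℕ} (M : ℝ → Matrix (Fin p) (Fin p) ℂ) (x : ℝ)
    (h : ∀ a b, DifferentiableAt ℝ (fun s => M s a b) x) (a b : Fin p) :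
    DifferentiableAt ℝ (fun s => (M s).adjugate a b) x := by
  have hfun : (fun s => (M s).adjugate a b)
      = fun s => ((M s).updateRow b (Pi.single a 1)).det := by
    funext s; rw [Matrix.adjugate_apply]
  rw [hfun]
  refine differentiableAt_matrix_det _ x ?_
  intro i j
  rcases eq_or_ne i b with h' | h'
  · simpa [Matrix.updateRow_apply, h'] using differentiableAt_const _
  · simpa [Matrix.updateRow_apply, h'] using h i j

/-- Entrywise derivative of the inverse of a matrix-valued function at a point of
invertibility. -/
lemma hasDerivAt_matrix_inv {p : ℕ} (M : ℝ → Matrix (Fin p) (Fin p) ℂ)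
    (M' : Matrix (Fin p) (Fin p) ℂ) (x : ℝ)
    (h : ∀ a b, HasDerivAt (fun s => M s a b) (M' a b) x)
    (hU : IsUnit (M x)) :
    ∀ a b, HasDerivAt (fun s => (M s)⁻¹ a b)
      ((-((M x)⁻¹ * M' * (M x)⁻¹)) a b) x := by
  classical
  have hdU : IsUnit (M x).det := (Matrix.isUnit_iff_isUnit_det _).1 hU
  have hdet0 : (M x).det ≠ 0 := hdU.ne_zero
  have hdiffE : ∀ a b, DifferentiableAt ℝ (fun s => M s a b) x :=
    fun a b => (h a b).differentiableAt
  have hdetD : DifferentiableAt ℝ (fun s => (M s).det) x :=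
    differentiableAt_matrix_det M x hdiffE
  have hinv_eq : ∀ s (a b : Fin p),
      (M s)⁻¹ a b = ((M s).det)⁻¹ * (M s).adjugate a b := by
    intro s a b
    rw [Matrix.inv_def, Ring.inverse_eq_inv']
    simp [Matrix.smul_apply, smul_eq_mul]
  have hdiff : ∀ a b, DifferentiableAt ℝ (fun s => (M s)⁻¹ a b) x := by
    intro a b
    have : (fun s => (M s)⁻¹ a b) = fun s => ((M s).det)⁻¹ * (M s).adjugate a b := by
      funext s; exact hinv_eq s a b
    rw [this]
    exact (hdetD.inv hdet0).mul (differentiableAt_matrix_adjugate M x hdiffE a b)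
  set K : Matrix (Fin p) (Fin p) ℂ :=
    Matrix.of fun a b => deriv (fun s => (M s)⁻¹ a b) x with hKdef
  have hK : ∀ a b, HasDerivAt (fun s => (M s)⁻¹ a b) (K a b) x :=
    fun a b => (hdiff a b).hasDerivAt
  have hprod := hasDerivAt_matrix_mul M (fun s => (M s)⁻¹) M' K x h hK
  have hev : ∀ᶠ s in nhds x, (M s).det ≠ 0 := hdetD.continuousAt.eventually_ne hdet0
  have hzero : M' * (M x)⁻¹ + M x * K = 0 := by
    ext a b
    have hconst : HasDerivAt (fun _ : ℝ => (1 : Matrix (Fin p) (Fin p) ℂ) a b) 0 x :=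
      hasDerivAt_const _ _
    have heq : (fun s => (M s * (M s)⁻¹) a b)
        =ᶠ[nhds x] fun _ => (1 : Matrix (Fin p) (Fin p) ℂ) a b := by
      filter_upwards [hev] with s hs
      rw [Matrix.mul_nonsing_inv _ (isUnit_iff_ne_zero.2 hs)]
    have := ((hprod a b).congr_of_eventuallyEq heq.symm).unique hconst
    simpa using this
  have hMK : M x * K = -(M' * (M x)⁻¹) := eq_neg_of_add_eq_zero_right hzero
  have hKval : K = -((M x)⁻¹ * M' * (M x)⁻¹) := by
    have h2 : (M x)⁻¹ * (M x * K) = (M x)⁻¹ * -(M' * (M x)⁻¹) := by rw [hMK]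
    rw [← Matrix.mul_assoc, Matrix.nonsing_inv_mul _ hdU, Matrix.one_mul] at h2
    rw [h2, Matrix.mul_neg, Matrix.mul_assoc]
  intro a b
  rw [← hKval]
  exact hK a b

/-- for an absolutely continuous `γ = [γ₁ γ₂]` with `γ j γ* ≡ -I` and
`γ' j γ* = 0` a.e., the block `γ₂` is invertible, the Schur coefficient satisfies
`I - (γ₂⁻¹γ₁)(γ₂⁻¹γ₁)* = γ₂⁻¹(γ₂⁻¹)*` (an invertible matrix), and a.e.
`γ₂' = γ₂ (γ₂⁻¹γ₁)' (γ₂⁻¹γ₁)* (I - (γ₂⁻¹γ₁)(γ₂⁻¹γ₁)*)⁻¹`. -/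
theorem gamma_two_recovery_ode
    {m₁ m₂ : ℕ} (T : ℝ) (hT : 0 < T)
    (γ γd : ℝ → Matrix (Fin m₂) (Fin m₁ ⊕ Fin m₂) ℂ)
    (hInt : ∀ a b, IntervalIntegrable (fun t => γd t a b) volume 0 T)
    (hRep : ∀ x ∈ Set.Icc (0 : ℝ) T, ∀ a b,
      γ x a b = γ 0 a b + ∫ t in (0:ℝ)..x, γd t a b)
    (hDeriv : ∀ᵐ x ∂(volume.restrict (Set.Icc (0 : ℝ) T)), ∀ a b,
      HasDerivAt (fun s => γ s a b) (γd x a b) x)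
    (hγj : ∀ x ∈ Set.Icc (0 : ℝ) T, γ x * Jm m₁ m₂ * (γ x)ᴴ = -1)
    (hγdj : ∀ᵐ x ∂(volume.restrict (Set.Icc (0 : ℝ) T)),
      γd x * Jm m₁ m₂ * (γ x)ᴴ = 0) :
    (∀ x ∈ Set.Icc (0 : ℝ) T, IsUnit (blkR γ x)) ∧
    (∀ x ∈ Set.Icc (0 : ℝ) T,
      (1 : Matrix (Fin m₂) (Fin m₂) ℂ) - schur γ x * (schur γ x)ᴴ
        = (blkR γ x)⁻¹ * ((blkR γ x)⁻¹)ᴴ) ∧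
    (∀ x ∈ Set.Icc (0 : ℝ) T,
      IsUnit ((1 : Matrix (Fin m₂) (Fin m₂) ℂ) - schur γ x * (schur γ x)ᴴ)) ∧
    (∀ᵐ x ∂(volume.restrict (Set.Icc (0 : ℝ) T)),
      ∃ D : Matrix (Fin m₂) (Fin m₁) ℂ,
        (∀ a b, HasDerivAt (fun s => schur γ s a b) (D a b) x) ∧
        (γd x).submatrix id Sum.inr
          = blkR γ x * D * (schur γ x)ᴴ *
            ((1 : Matrix (Fin m₂) (Fin m₂) ℂ) - schur γ x * (schur γ x)ᴴ)⁻¹) := by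
  classical
  -- basic structural identity: γ₂ γ₂ᴴ = 1 + γ₁ γ₁ᴴ on [0, T]
  have key1 : ∀ x ∈ Set.Icc (0 : ℝ) T,
      blkR γ x * (blkR γ x)ᴴ = 1 + blkL γ x * (blkL γ x)ᴴ := by
    intro x hx
    have h := hγj x hx
    rw [mul_Jm_conjTranspose] at h
    have h' : blkL γ x * (blkL γ x)ᴴ - blkR γ x * (blkR γ x)ᴴ = -1 := h
    calc blkR γ x * (blkR γ x)ᴴ
        = blkL γ x * (blkL γ x)ᴴ
            - (blkL γ x * (blkL γ x)ᴴ - blkR γ x * (blkR γ x)ᴴ) := by abel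
      _ = 1 + blkL γ x * (blkL γ x)ᴴ := by rw [h']; abel
  -- part 1: invertibility of γ₂
  have hUnit : ∀ x ∈ Set.Icc (0 : ℝ) T, IsUnit (blkR γ x) := by
    intro x hx
    have hpd : (blkR γ x * (blkR γ x)ᴴ).PosDef := by
      rw [key1 x hx]
      exact Matrix.PosDef.one.add_posSemidef
        (Matrix.posSemidef_self_mul_conjTranspose _)
    have hdet : IsUnit (blkR γ x * (blkR γ x)ᴴ).det :=
      (Matrix.isUnit_iff_isUnit_det _).1 hpd.isUnit
    rw [Matrix.det_mul] at hdet
    exact (Matrix.isUnit_iff_isUnit_det _).2 (isUnit_of_mul_isUnit_left hdet)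
  -- part 2: the Schur identity
  have key2 : ∀ x ∈ Set.Icc (0 : ℝ) T,
      (1 : Matrix (Fin m₂) (Fin m₂) ℂ) - schur γ x * (schur γ x)ᴴ
        = (blkR γ x)⁻¹ * ((blkR γ x)⁻¹)ᴴ := by
    intro x hx
    have hU := hUnit x hx
    have hdU : IsUnit (blkR γ x).det := (Matrix.isUnit_iff_isUnit_det _).1 hU
    have hdUH : IsUnit ((blkR γ x)ᴴ).det := by
      rw [Matrix.det_conjTranspose]; exact hdU.star
    have h1 : blkL γ x * (blkL γ x)ᴴ
        = blkR γ x * (blkR γ x)ᴴ - 1 := by rw [key1 x hx]; abel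
    have hσ : schur γ x * (schur γ x)ᴴ
        = 1 - (blkR γ x)⁻¹ * ((blkR γ x)ᴴ)⁻¹ := by
      rw [schur, Matrix.conjTranspose_mul, Matrix.conjTranspose_nonsing_inv]
      calc (blkR γ x)⁻¹ * blkL γ x * ((blkL γ x)ᴴ * ((blkR γ x)ᴴ)⁻¹)
          = (blkR γ x)⁻¹ * ((blkL γ x * (blkL γ x)ᴴ) * ((blkR γ x)ᴴ)⁻¹) := by
            rw [Matrix.mul_assoc, Matrix.mul_assoc]
        _ = (blkR γ x)⁻¹ * ((blkR γ x * (blkR γ x)ᴴ - 1) * ((blkR γ x)ᴴ)⁻¹) := by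
            rw [h1]
        _ = (blkR γ x)⁻¹ * (blkR γ x * ((blkR γ x)ᴴ * ((blkR γ x)ᴴ)⁻¹))
              - (blkR γ x)⁻¹ * ((blkR γ x)ᴴ)⁻¹ := by
            rw [Matrix.sub_mul, Matrix.mul_sub, Matrix.one_mul, Matrix.mul_assoc]
        _ = 1 - (blkR γ x)⁻¹ * ((blkR γ x)ᴴ)⁻¹ := by
            rw [Matrix.mul_nonsing_inv _ hdUH, Matrix.mul_one,
              Matrix.nonsing_inv_mul _ hdU]
    rw [hσ, Matrix.conjTranspose_nonsing_inv]
    abel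
  -- part 3: invertibility of 1 - σσᴴ
  have key3 : ∀ x ∈ Set.Icc (0 : ℝ) T,
      IsUnit ((1 : Matrix (Fin m₂) (Fin m₂) ℂ) - schur γ x * (schur γ x)ᴴ) := by
    intro x hx
    have hU := hUnit x hx
    have hdU : IsUnit (blkR γ x).det := (Matrix.isUnit_iff_isUnit_det _).1 hU
    rw [key2 x hx]
    apply (Matrix.isUnit_iff_isUnit_det _).2
    rw [Matrix.det_mul, Matrix.det_conjTranspose, Matrix.det_nonsing_inv]
    exact (isUnit_ringInverse.2 hdU).mul (isUnit_ringInverse.2 hdU).star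
  refine ⟨hUnit, key2, key3, ?_⟩
  -- part 4
  filter_upwards [hDeriv, hγdj, ae_restrict_mem measurableSet_Icc] with x hd hdj hx
  have hU := hUnit x hx
  have hdU : IsUnit (blkR γ x).det := (Matrix.isUnit_iff_isUnit_det _).1 hU
  have hdUH : IsUnit ((blkR γ x)ᴴ).det := by
    rw [Matrix.det_conjTranspose]; exact hdU.star
  set d1 : Matrix (Fin m₂) (Fin m₁) ℂ := (γd x).submatrix id Sum.inl with hd1def
  set d2 : Matrix (Fin m₂) (Fin m₂) ℂ := (γd x).submatrix id Sum.inr with hd2def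
  have hG2d : ∀ a b, HasDerivAt (fun s => blkR γ s a b) (d2 a b) x :=
    fun a b => hd a (Sum.inr b)
  have hG1d : ∀ a b, HasDerivAt (fun s => blkL γ s a b) (d1 a b) x :=
    fun a b => hd a (Sum.inl b)
  have hInv := hasDerivAt_matrix_inv (fun s => blkR γ s) d2 x hG2d hU
  set D : Matrix (Fin m₂) (Fin m₁) ℂ :=
    (-((blkR γ x)⁻¹ * d2 * (blkR γ x)⁻¹)) * blkL γ x + (blkR γ x)⁻¹ * d1 with hDdef
  have hD : ∀ a b, HasDerivAt (fun s => schur γ s a b) (D a b) x :=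
    hasDerivAt_matrix_mul (fun s => (blkR γ s)⁻¹) (fun s => blkL γ s)
      (-((blkR γ x)⁻¹ * d2 * (blkR γ x)⁻¹)) d1 x hInv hG1d
  refine ⟨D, hD, ?_⟩
  -- the balance relation from γ' j γᴴ = 0
  have hbal : d1 * (blkL γ x)ᴴ = d2 * (blkR γ x)ᴴ := by
    have h := hdj
    rw [mul_Jm_conjTranspose] at h
    exact sub_eq_zero.1 h
  -- compute blkR * D
  have hED : blkR γ x * D = -(d2 * ((blkR γ x)⁻¹ * blkL γ x)) + d1 := by
    rw [hDdef, Matrix.mul_add, Matrix.neg_mul, Matrix.mul_neg]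
    congr 1
    · congr 1
      calc blkR γ x * ((blkR γ x)⁻¹ * d2 * (blkR γ x)⁻¹ * blkL γ x)
          = blkR γ x * (blkR γ x)⁻¹ * (d2 * ((blkR γ x)⁻¹ * blkL γ x)) := by
            simp only [Matrix.mul_assoc]
        _ = d2 * ((blkR γ x)⁻¹ * blkL γ x) := by
            rw [Matrix.mul_nonsing_inv _ hdU, Matrix.one_mul]
    · rw [← Matrix.mul_assoc, Matrix.mul_nonsing_inv _ hdU, Matrix.one_mul]
  -- compute blkR * D * σᴴ
  have hEDσ : blkR γ x * D * (schur γ x)ᴴ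
      = d2 * (1 - schur γ x * (schur γ x)ᴴ) := by
    have hd1σ : d1 * (schur γ x)ᴴ = d2 := by
      rw [schur, Matrix.conjTranspose_mul, Matrix.conjTranspose_nonsing_inv,
        ← Matrix.mul_assoc, hbal, Matrix.mul_assoc,
        Matrix.mul_nonsing_inv _ hdUH, Matrix.mul_one]
    calc blkR γ x * D * (schur γ x)ᴴ
        = (-(d2 * ((blkR γ x)⁻¹ * blkL γ x)) + d1) * (schur γ x)ᴴ := by rw [hED]
      _ = -(d2 * (schur γ x * (schur γ x)ᴴ)) + d1 * (schur γ x)ᴴ := by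
          rw [Matrix.add_mul, Matrix.neg_mul, schur, Matrix.mul_assoc]
      _ = d2 * (1 - schur γ x * (schur γ x)ᴴ) := by
          rw [hd1σ, Matrix.mul_sub, Matrix.mul_one]; abel
  -- conclude
  have h3 := key3 x hx
  have hdet3 : IsUnit ((1 : Matrix (Fin m₂) (Fin m₂) ℂ)
      - schur γ x * (schur γ x)ᴴ).det := (Matrix.isUnit_iff_isUnit_det _).1 h3
  rw [hEDσ, Matrix.mul_assoc, Matrix.mul_nonsing_inv _ hdet3, Matrix.mul_one]
end
end

section
/- Let u(x) = [β(x); γ(x)] be an absolutely continuous m×m matrix function on [0,T] with blocks β = [β₁ β₂] (m₁×m₁ and m₁×m₂) and γ = [γ₁ γ₂] (m₂×m₁ and m₂×m₂) such that β j β* ≡ I_{m₁}, γ j γ* ≡ −I_{m₂}, β j γ* ≡ 0, β' j β* = 0 a.e., and β(0) = [I_{m₁} 0]. Set β̃(x) = [I_{m₁} γ₁(x)*(γ₂(x)*)⁻¹]. Then β(x) = β₁(x)β̃(x) for every x, β₁(x) is invertible with β̃(x) j β̃(x)* = β₁(x)⁻¹(β₁(x)*)⁻¹, and β₁ satisfies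 the first-order differential equation β₁' = −β₁ (β̃' j β̃*)(β̃ j β̃*)⁻¹ almost everywhere with β₁(0) = I_{m₁}. -/
open MeasureTheory Matrix ComplexOrder

noncomputable section

/-- Horizontal concatenation `[A B]` of an `k × m₁` and a `k × m₂` matrix. -/
def hcat {k m₁ m₂ : ℕ} (A : Matrix (Fin k) (Fin m₁) ℂ) (B : Matrix (Fin k) (Fin m₂) ℂ) :
    Matrix (Fin k) (Fin m₁ ⊕ Fin m₂) ℂ :=
  Matrix.of fun i => Sum.elim (A i) (B i)

/-- The auxiliary row `β̃(x) = [I_{m₁}  γ₁(x)*(γ₂(x)*)⁻¹]` built from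
`γ = [γ₁ γ₂]`. -/
def βtil {m₁ m₂ : ℕ} (γ : ℝ → Matrix (Fin m₂) (Fin m₁ ⊕ Fin m₂) ℂ) (x : ℝ) :
    Matrix (Fin m₁) (Fin m₁ ⊕ Fin m₂) ℂ :=
  hcat 1 (((γ x).submatrix id Sum.inl)ᴴ * ((((γ x).submatrix id Sum.inr))ᴴ)⁻¹)

lemma hcat_eq {k m₁ m₂ : ℕ} (M : Matrix (Fin k) (Fin m₁ ⊕ Fin m₂) ℂ) :
    hcat (M.submatrix id Sum.inl) (M.submatrix id Sum.inr) = M := by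
  ext i j; cases j <;> rfl

lemma mul_hcat {k l m₁ m₂ : ℕ} (C : Matrix (Fin l) (Fin k) ℂ) (A : Matrix (Fin k) (Fin m₁) ℂ)
    (B : Matrix (Fin k) (Fin m₂) ℂ) : C * hcat A B = hcat (C * A) (C * B) := by
  ext i j; cases j <;> simp [hcat, Matrix.mul_apply]

lemma mul_Jm {k m₁ m₂ : ℕ} (M : Matrix (Fin k) (Fin m₁ ⊕ Fin m₂) ℂ) :
    M * Jm m₁ m₂ = hcat (M.submatrix id Sum.inl) (-(M.submatrix id Sum.inr)) := by
  ext i j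
  cases j with
  | inl j => simp [Jm, hcat, Matrix.mul_apply, Fintype.sum_sum_type, Matrix.one_apply,
      Finset.sum_ite_eq']
  | inr j => simp [Jm, hcat, Matrix.mul_apply, Fintype.sum_sum_type, Matrix.one_apply,
      Finset.sum_ite_eq']

lemma hcat_mul_conjTranspose {k l m₁ m₂ : ℕ} (A : Matrix (Fin k) (Fin m₁) ℂ)
    (B : Matrix (Fin k) (Fin m₂) ℂ) (N : Matrix (Fin l) (Fin m₁ ⊕ Fin m₂) ℂ) :
    hcat A B * Nᴴ = A * (N.submatrix id Sum.inl)ᴴ + B * (N.submatrix id Sum.inr)ᴴ := by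
  ext i j
  simp [hcat, Matrix.mul_apply, Fintype.sum_sum_type, Matrix.conjTranspose_apply]

lemma mulJmul {k l m₁ m₂ : ℕ} (M : Matrix (Fin k) (Fin m₁ ⊕ Fin m₂) ℂ)
    (N : Matrix (Fin l) (Fin m₁ ⊕ Fin m₂) ℂ) :
    M * Jm m₁ m₂ * Nᴴ = M.submatrix id Sum.inl * (N.submatrix id Sum.inl)ᴴ
      - M.submatrix id Sum.inr * (N.submatrix id Sum.inr)ᴴ := by
  rw [mul_Jm, hcat_mul_conjTranspose, Matrix.neg_mul, ← sub_eq_add_neg]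

lemma isUnit_of_self_mul_conj {n p : ℕ} (A : Matrix (Fin n) (Fin n) ℂ)
    (B : Matrix (Fin n) (Fin p) ℂ) (h : A * Aᴴ = 1 + B * Bᴴ) : IsUnit A := by
  have hpd : (1 + B * Bᴴ : Matrix (Fin n) (Fin n) ℂ).PosDef :=
    Matrix.PosDef.add_posSemidef Matrix.PosDef.one
      (Matrix.posSemidef_self_mul_conjTranspose B)
  have hu : IsUnit (A * Aᴴ) := h ▸ hpd.isUnit
  rw [Matrix.isUnit_iff_isUnit_det] at hu ⊢
  rw [Matrix.det_mul] at hu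
  exact isUnit_of_mul_isUnit_left hu

lemma isUnit_conjT {n : ℕ} {A : Matrix (Fin n) (Fin n) ℂ} (h : IsUnit A) : IsUnit Aᴴ := by
  rw [Matrix.isUnit_iff_isUnit_det, Matrix.det_conjTranspose] at *
  exact h.star

/-- pointwise structural lemma -/
lemma pointwise_struct {m₁ m₂ : ℕ} (b : Matrix (Fin m₁) (Fin m₁ ⊕ Fin m₂) ℂ)
    (g : Matrix (Fin m₂) (Fin m₁ ⊕ Fin m₂) ℂ)
    (hb : b * Jm m₁ m₂ * bᴴ = 1) (hg : g * Jm m₁ m₂ * gᴴ = -1)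
    (hbg : b * Jm m₁ m₂ * gᴴ = 0) :
    IsUnit ((g.submatrix id Sum.inr)ᴴ) ∧
    b = b.submatrix id Sum.inl *
        hcat 1 ((g.submatrix id Sum.inl)ᴴ * ((g.submatrix id Sum.inr)ᴴ)⁻¹) ∧
    IsUnit (b.submatrix id Sum.inl) ∧
    (hcat (1 : Matrix (Fin m₁) (Fin m₁) ℂ) ((g.submatrix id Sum.inl)ᴴ * ((g.submatrix id Sum.inr)ᴴ)⁻¹) * Jm m₁ m₂ *
      (hcat (1 : Matrix (Fin m₁) (Fin m₁) ℂ) ((g.submatrix id Sum.inl)ᴴ * ((g.submatrix id Sum.inr)ᴴ)⁻¹))ᴴ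
      = (b.submatrix id Sum.inl)⁻¹ * ((b.submatrix id Sum.inl)⁻¹)ᴴ) := by
  set b₁ := b.submatrix id Sum.inl with hb₁def
  set b₂ := b.submatrix id Sum.inr with hb₂def
  set g₁ := g.submatrix id Sum.inl with hg₁def
  set g₂ := g.submatrix id Sum.inr with hg₂def
  have hb' := hb; have hg' := hg; have hbg' := hbg
  rw [mulJmul] at hb' hg' hbg'
  have hg2 : g₂ * g₂ᴴ = 1 + g₁ * g₁ᴴ := by
    have h3 := eq_add_of_sub_eq hg'
    rw [h3]; abel
  have hg2u : IsUnit g₂ := isUnit_of_self_mul_conj g₂ g₁ hg2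
  have hg2uH : IsUnit g₂ᴴ := isUnit_conjT hg2u
  have hg2d : IsUnit (g₂ᴴ).det := (Matrix.isUnit_iff_isUnit_det _).mp hg2uH
  refine ⟨hg2uH, ?_⟩
  have hb2 : b₂ = b₁ * (g₁ᴴ * (g₂ᴴ)⁻¹) := by
    have h : b₁ * g₁ᴴ = b₂ * g₂ᴴ := sub_eq_zero.mp hbg'
    calc b₂ = b₂ * g₂ᴴ * (g₂ᴴ)⁻¹ := (Matrix.mul_nonsing_inv_cancel_right _ _ hg2d).symm
    _ = b₁ * g₁ᴴ * (g₂ᴴ)⁻¹ := by rw [← h]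
    _ = b₁ * (g₁ᴴ * (g₂ᴴ)⁻¹) := by rw [Matrix.mul_assoc]
  have hfact : b = b₁ * hcat 1 (g₁ᴴ * (g₂ᴴ)⁻¹) := by
    conv_lhs => rw [← hcat_eq b]
    rw [mul_hcat, Matrix.mul_one, ← hb2]
  refine ⟨hfact, ?_⟩
  have hb1 : b₁ * b₁ᴴ = 1 + b₂ * b₂ᴴ := eq_add_of_sub_eq hb'
  have hb1u : IsUnit b₁ := isUnit_of_self_mul_conj b₁ b₂ hb1
  refine ⟨hb1u, ?_⟩
  have hb1d : IsUnit b₁.det := (Matrix.isUnit_iff_isUnit_det _).mp hb1u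
  have hb1dH : IsUnit (b₁ᴴ).det := (Matrix.isUnit_iff_isUnit_det _).mp (isUnit_conjT hb1u)
  set Bt := hcat (1 : Matrix (Fin m₁) (Fin m₁) ℂ) (g₁ᴴ * (g₂ᴴ)⁻¹) with hBt
  have hbS : b₁ * (Bt * Jm m₁ m₂ * Btᴴ * b₁ᴴ) = 1 := by
    have h4 : (b₁ * Bt) * Jm m₁ m₂ * (b₁ * Bt)ᴴ = 1 := by rw [← hfact]; exact hb
    rw [Matrix.conjTranspose_mul] at h4
    calc b₁ * (Bt * Jm m₁ m₂ * Btᴴ * b₁ᴴ)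
        = (b₁ * Bt) * Jm m₁ m₂ * (Btᴴ * b₁ᴴ) := by
          simp only [Matrix.mul_assoc]
    _ = 1 := by rw [← Matrix.mul_assoc] at h4 ⊢; exact h4
  have h1 : Bt * Jm m₁ m₂ * Btᴴ * b₁ᴴ = b₁⁻¹ := by
    have h5 := congrArg (fun M => b₁⁻¹ * M) hbS
    simpa [Matrix.nonsing_inv_mul_cancel_left _ _ hb1d, Matrix.mul_one] using h5
  have h2 : Bt * Jm m₁ m₂ * Btᴴ = b₁⁻¹ * (b₁ᴴ)⁻¹ := by
    have h6 := congrArg (fun M => M * (b₁ᴴ)⁻¹) h1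
    simpa [Matrix.mul_nonsing_inv_cancel_right _ _ hb1dH] using h6
  rw [h2, Matrix.conjTranspose_nonsing_inv]

lemma diffAt_det {n : ℕ} (M : ℝ → Matrix (Fin n) (Fin n) ℂ) (x : ℝ)
    (h : ∀ i j, DifferentiableAt ℝ (fun s => M s i j) x) :
    DifferentiableAt ℝ (fun s => (M s).det) x := by
  have heq : (fun s => (M s).det)
      = fun s => ∑ σ : Equiv.Perm (Fin n), (Equiv.Perm.sign σ : ℂ) * ∏ i, M s (σ i) i := by
    funext s
    rw [Matrix.det_apply]
    simp [Units.smul_def, zsmul_eq_mul]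
  rw [heq]
  refine DifferentiableAt.fun_sum fun σ _ => DifferentiableAt.const_mul ?_ _
  exact (HasFDerivAt.finset_prod (fun i _ => (h (σ i) i).hasFDerivAt)).differentiableAt

lemma diffAt_inv_apply {n : ℕ} (M : ℝ → Matrix (Fin n) (Fin n) ℂ) (x : ℝ)
    (h : ∀ i j, DifferentiableAt ℝ (fun s => M s i j) x) (hM : IsUnit (M x)) (i j : Fin n) :
    DifferentiableAt ℝ (fun s => (M s)⁻¹ i j) x := by
  have heq : (fun s => (M s)⁻¹ i j)
      = fun s => ((M s).det)⁻¹ * ((M s).updateRow j (Pi.single i 1)).det := by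
    funext s
    rw [Matrix.inv_def, Matrix.smul_apply, Matrix.adjugate_apply, Ring.inverse_eq_inv',
      smul_eq_mul]
  rw [heq]
  have hdet : (M x).det ≠ 0 := ((Matrix.isUnit_iff_isUnit_det _).mp hM).ne_zero
  refine DifferentiableAt.mul ((diffAt_det M x h).inv hdet) ?_
  refine diffAt_det _ x fun a b => ?_
  by_cases ha : a = j
  · simp [Matrix.updateRow_apply, ha]
  · simp only [Matrix.updateRow_apply, if_neg ha]
    exact h a b

lemma diffAt_btil {m₁ m₂ : ℕ} (γ : ℝ → Matrix (Fin m₂) (Fin m₁ ⊕ Fin m₂) ℂ) (x : ℝ)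
    (hγd : ∀ i j, DifferentiableAt ℝ (fun s => γ s i j) x)
    (hu : IsUnit (((γ x).submatrix id Sum.inr)ᴴ)) (a : Fin m₁) (b : Fin m₁ ⊕ Fin m₂) :
    DifferentiableAt ℝ (fun s => βtil γ s a b) x := by
  cases b with
  | inl c =>
    have heq : (fun s => βtil γ s a (Sum.inl c))
        = fun _ => (1 : Matrix (Fin m₁) (Fin m₁) ℂ) a c := rfl
    rw [heq]; exact differentiableAt_const _
  | inr c =>
    have heq : (fun s => βtil γ s a (Sum.inr c)) =
        fun s => ∑ k, star (γ s k (Sum.inl a)) * (((γ s).submatrix id Sum.inr)ᴴ)⁻¹ k c := by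
      funext s
      simp [βtil, hcat, Matrix.mul_apply, Matrix.conjTranspose_apply, Matrix.submatrix_apply]
    rw [heq]
    refine DifferentiableAt.fun_sum fun k _ => DifferentiableAt.fun_mul ?_ ?_
    · exact (hγd k (Sum.inl a)).star
    · exact diffAt_inv_apply (fun s => ((γ s).submatrix id Sum.inr)ᴴ) x
        (fun i j => (hγd j (Sum.inr i)).star) hu k c

/-- for `u = [β; γ]` absolutely continuous with `β j β* ≡ I`,
`γ j γ* ≡ -I`, `β j γ* ≡ 0`, `β' j β* = 0` a.e. and `β(0) = [I 0]`, one has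
`β = β₁ β̃`, `β₁` invertible with `β̃ j β̃* = β₁⁻¹(β₁*)⁻¹`, and `β₁` solves
`β₁' = -β₁ (β̃' j β̃*)(β̃ j β̃*)⁻¹`, `β₁(0) = I`. -/
theorem beta_one_recovery_ode
    {m₁ m₂ : ℕ} (T : ℝ) (hT : 0 < T)
    (β βd : ℝ → Matrix (Fin m₁) (Fin m₁ ⊕ Fin m₂) ℂ)
    (γ γd : ℝ → Matrix (Fin m₂) (Fin m₁ ⊕ Fin m₂) ℂ)
    (hIntβ : ∀ a b, IntervalIntegrable (fun t => βd t a b) volume 0 T)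
    (hRepβ : ∀ x ∈ Set.Icc (0 : ℝ) T, ∀ a b,
      β x a b = β 0 a b + ∫ t in (0:ℝ)..x, βd t a b)
    (hDerivβ : ∀ᵐ x ∂(volume.restrict (Set.Icc (0 : ℝ) T)), ∀ a b,
      HasDerivAt (fun s => β s a b) (βd x a b) x)
    (hIntγ : ∀ a b, IntervalIntegrable (fun t => γd t a b) volume 0 T)
    (hRepγ : ∀ x ∈ Set.Icc (0 : ℝ) T, ∀ a b,
      γ x a b = γ 0 a b + ∫ t in (0:ℝ)..x, γd t a b)
    (hDerivγ : ∀ᵐ x ∂(volume.restrict (Set.Icc (0 : ℝ) T)), ∀ a b,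
      HasDerivAt (fun s => γ s a b) (γd x a b) x)
    (hβj : ∀ x ∈ Set.Icc (0 : ℝ) T, β x * Jm m₁ m₂ * (β x)ᴴ = 1)
    (hγj : ∀ x ∈ Set.Icc (0 : ℝ) T, γ x * Jm m₁ m₂ * (γ x)ᴴ = -1)
    (hβγ : ∀ x ∈ Set.Icc (0 : ℝ) T, β x * Jm m₁ m₂ * (γ x)ᴴ = 0)
    (hβdj : ∀ᵐ x ∂(volume.restrict (Set.Icc (0 : ℝ) T)),
      βd x * Jm m₁ m₂ * (β x)ᴴ = 0)
    (hβ0 : β 0 = hcat (1 : Matrix (Fin m₁) (Fin m₁) ℂ) 0) :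
    (∀ x ∈ Set.Icc (0 : ℝ) T,
      β x = (β x).submatrix id Sum.inl * βtil γ x) ∧
    (∀ x ∈ Set.Icc (0 : ℝ) T, IsUnit ((β x).submatrix id Sum.inl)) ∧
    (∀ x ∈ Set.Icc (0 : ℝ) T,
      βtil γ x * Jm m₁ m₂ * (βtil γ x)ᴴ
        = ((β x).submatrix id Sum.inl)⁻¹ * (((β x).submatrix id Sum.inl)⁻¹)ᴴ) ∧
    ((β 0).submatrix id Sum.inl = 1) ∧
    (∀ᵐ x ∂(volume.restrict (Set.Icc (0 : ℝ) T)),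
      ∃ Bd : Matrix (Fin m₁) (Fin m₁ ⊕ Fin m₂) ℂ,
        (∀ a b, HasDerivAt (fun s => βtil γ s a b) (Bd a b) x) ∧
        (βd x).submatrix id Sum.inl
          = -((β x).submatrix id Sum.inl) *
              (Bd * Jm m₁ m₂ * (βtil γ x)ᴴ) *
              (βtil γ x * Jm m₁ m₂ * (βtil γ x)ᴴ)⁻¹) := by
  have key : ∀ x ∈ Set.Icc (0 : ℝ) T,
      IsUnit (((γ x).submatrix id Sum.inr)ᴴ) ∧
      β x = (β x).submatrix id Sum.inl * βtil γ x ∧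
      IsUnit ((β x).submatrix id Sum.inl) ∧
      βtil γ x * Jm m₁ m₂ * (βtil γ x)ᴴ
        = ((β x).submatrix id Sum.inl)⁻¹ * (((β x).submatrix id Sum.inl)⁻¹)ᴴ :=
    fun x hx => pointwise_struct (β x) (γ x) (hβj x hx) (hγj x hx) (hβγ x hx)
  refine ⟨fun x hx => (key x hx).2.1, fun x hx => (key x hx).2.2.1,
    fun x hx => (key x hx).2.2.2, ?_, ?_⟩
  · ext i j
    simp [hβ0, hcat]
  -- a.e. part
  have hmem : ∀ᵐ x ∂(volume.restrict (Set.Icc (0 : ℝ) T)), x ∈ Set.Icc (0 : ℝ) T :=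
    ae_restrict_mem measurableSet_Icc
  have hne : ∀ᵐ x ∂(volume.restrict (Set.Icc (0 : ℝ) T)), x ≠ 0 ∧ x ≠ T := by
    refine ae_restrict_of_ae ?_
    have h0 : (volume : Measure ℝ) {(0 : ℝ), T} = 0 :=
      (Set.toFinite _).measure_zero _
    have hae := measure_eq_zero_iff_ae_notMem.mp h0
    filter_upwards [hae] with x hx
    simp only [Set.mem_insert_iff, Set.mem_singleton_iff] at hx
    push_neg at hx; exact hx
  filter_upwards [hDerivβ, hDerivγ, hβdj, hmem, hne] with x hdβ hdγ hbd hx hxe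
  have hxIoo : x ∈ Set.Ioo (0 : ℝ) T :=
    ⟨lt_of_le_of_ne hx.1 (Ne.symm hxe.1), lt_of_le_of_ne hx.2 hxe.2⟩
  obtain ⟨hg2uH, hfx, hb1u, hS⟩ := key x hx
  set b₁ := (β x).submatrix id Sum.inl with hb₁def
  set Bt := βtil γ x with hBtdef
  -- derivative of βtil
  have hdiff : ∀ a b, DifferentiableAt ℝ (fun s => βtil γ s a b) x :=
    fun a b => diffAt_btil γ x (fun i j => (hdγ i j).differentiableAt) hg2uH a b
  set Bd : Matrix (Fin m₁) (Fin m₁ ⊕ Fin m₂) ℂ :=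
    Matrix.of fun a b => deriv (fun s => βtil γ s a b) x with hBddef
  have hBdd : ∀ a b, HasDerivAt (fun s => βtil γ s a b) (Bd a b) x :=
    fun a b => (hdiff a b).hasDerivAt
  refine ⟨Bd, hBdd, ?_⟩
  set D₁ := (βd x).submatrix id Sum.inl with hD₁def
  -- derivative of the product β₁ * βtil
  have hprod : ∀ a b, HasDerivAt (fun s => ((β s).submatrix id Sum.inl * βtil γ s) a b)
      ((D₁ * Bt + b₁ * Bd) a b) x := by
    intro a b
    have hfun : (fun s => (((β s).submatrix id Sum.inl) * βtil γ s) a b)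
        = fun s => ∑ k, β s a (Sum.inl k) * βtil γ s k b := by
      funext s
      simp [Matrix.mul_apply]
    have hval : (D₁ * Bt + b₁ * Bd) a b
        = ∑ k, (βd x a (Sum.inl k) * βtil γ x k b + β x a (Sum.inl k) * Bd k b) := by
      simp only [Matrix.add_apply, Matrix.mul_apply, ← Finset.sum_add_distrib]
      refine Finset.sum_congr rfl fun k _ => ?_
      rw [hD₁def, hb₁def, hBtdef]
      simp [Matrix.submatrix_apply]
    rw [hfun, hval]
    exact HasDerivAt.fun_sum fun k _ => (hdβ a (Sum.inl k)).mul (hBdd k b)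
  -- transfer through eventual equality on Ioo
  have huniq : βd x = D₁ * Bt + b₁ * Bd := by
    ext a b
    have hev : (fun s => β s a b)
        =ᶠ[nhds x] (fun s => ((β s).submatrix id Sum.inl * βtil γ s) a b) := by
      filter_upwards [isOpen_Ioo.mem_nhds hxIoo] with s hs
      rw [← (key s (Set.Ioo_subset_Icc_self hs)).2.1]
    have h1 : HasDerivAt (fun s => β s a b) ((D₁ * Bt + b₁ * Bd) a b) x :=
      (hev.hasDerivAt_iff).mpr (hprod a b)
    exact (hdβ a b).unique h1
  -- the algebra
  set W := Bd * Jm m₁ m₂ * Btᴴ with hWdef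
  set S := Bt * Jm m₁ m₂ * Btᴴ with hSdef
  have hb1dH : IsUnit (b₁ᴴ).det := (Matrix.isUnit_iff_isUnit_det _).mp (isUnit_conjT hb1u)
  have hSu : IsUnit S := by
    rw [hS]
    exact ((Matrix.isUnit_nonsing_inv_iff).mpr hb1u).mul
      (isUnit_conjT ((Matrix.isUnit_nonsing_inv_iff).mpr hb1u))
  have hSd : IsUnit S.det := (Matrix.isUnit_iff_isUnit_det _).mp hSu
  have h1 : (D₁ * S + b₁ * W) * b₁ᴴ = 0 := by
    have h0 : (D₁ * Bt + b₁ * Bd) * Jm m₁ m₂ * (Btᴴ * b₁ᴴ) = 0 := by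
      rw [← huniq, ← Matrix.conjTranspose_mul, ← hfx]
      exact hbd
    rw [hSdef, hWdef]
    rw [← h0]
    simp only [Matrix.add_mul, Matrix.mul_assoc]
  have h2 : D₁ * S + b₁ * W = 0 := by
    have h6 := congrArg (fun M => M * (b₁ᴴ)⁻¹) h1
    simpa [Matrix.mul_nonsing_inv_cancel_right _ _ hb1dH] using h6
  have h3 : D₁ * S = -(b₁ * W) := eq_neg_of_add_eq_zero_left h2
  calc D₁ = D₁ * S * S⁻¹ := (Matrix.mul_nonsing_inv_cancel_right _ _ hSd).symm
  _ = -(b₁ * W) * S⁻¹ := by rw [h3]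
  _ = -b₁ * W * S⁻¹ := by simp [Matrix.neg_mul]
end
end
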